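/- arXiv:2201.10037 — 6 statements merged into one kernel-verified Lean document; each statement's English description precedes it below -/
import Mathlib

section
/- Let d be an n×n real matrix with zero diagonal and all off-diagonal entries strictly positive, with n ≥ 2. Define t_d to be the infimum of the set of t > 0 such that the matrix Z(t) with entries Z(t)_{jk} = exp(-t d_{jk}) is strictly diagonally dominant (i.e., 1 > Σ_{k≠j} exp(-t d_{jk}) for every j). Then log(n-1) / (min_j max_k d_{jk}) ≤ t_d ≤ log(n-1) / (min_j min_{k≠j} d_{jk}). -/
/-- Bounds on the diagonal cutoff scale `t_d`, the infimum of scales `t > 0` at which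
`exp[-t d]` is strictly diagonally dominant. -/
theorem diagonal_cutoff_bounds (n : ℕ) (hn : 2 ≤ n) (d : Matrix (Fin n) (Fin n) ℝ)
    (hdiag : ∀ j, d j j = 0) (hoff : ∀ j k, j ≠ k → 0 < d j k) :
    Real.log (n - 1) / (⨅ j, ⨆ k, d j k) ≤
      sInf {t : ℝ | 0 < t ∧ ∀ j, ∑ k ∈ Finset.univ.erase j, Real.exp (-t * d j k) < 1} ∧
    sInf {t : ℝ | 0 < t ∧ ∀ j, ∑ k ∈ Finset.univ.erase j, Real.exp (-t * d j k) < 1} ≤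
      Real.log (n - 1) / (⨅ j, ⨅ k : {k : Fin n // k ≠ j}, d j k.1) := by
  haveI : NeZero n := ⟨by omega⟩
  haveI : Nontrivial (Fin n) := Fin.nontrivial_iff_two_le.mpr hn
  haveI hne : ∀ j : Fin n, Nonempty {k : Fin n // k ≠ j} := by
    intro j
    obtain ⟨k, hk⟩ := exists_ne j
    exact ⟨⟨k, hk⟩⟩
  set S := {t : ℝ | 0 < t ∧ ∀ j, ∑ k ∈ Finset.univ.erase j, Real.exp (-t * d j k) < 1} with hS
  have hn1 : (1:ℝ) ≤ (n:ℝ) - 1 := by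
    have : (2:ℝ) ≤ (n:ℝ) := by exact_mod_cast hn
    linarith
  have hn1pos : (0:ℝ) < (n:ℝ) - 1 := by linarith
  have hlog : 0 ≤ Real.log ((n:ℝ) - 1) := Real.log_nonneg hn1
  -- m : min over off-diagonal entries
  set m := ⨅ j, ⨅ k : {k : Fin n // k ≠ j}, d j k.1 with hm
  have hbdd : ∀ j : Fin n, BddBelow (Set.range fun k : {k : Fin n // k ≠ j} => d j k.1) :=
    fun j => (Set.finite_range _).bddBelow
  have hm_le : ∀ j k, k ≠ j → m ≤ d j k := by
    intro j k hk
    calc m ≤ ⨅ k : {k : Fin n // k ≠ j}, d j k.1 :=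
          ciInf_le (Set.finite_range _).bddBelow j
      _ ≤ d j k := ciInf_le (hbdd j) ⟨k, hk⟩
  have hmpos : 0 < m := by
    obtain ⟨j0, hj0⟩ := exists_eq_ciInf_of_finite
      (f := fun j : Fin n => ⨅ k : {k : Fin n // k ≠ j}, d j k.1)
    obtain ⟨k0, hk0⟩ := exists_eq_ciInf_of_finite
      (f := fun k : {k : Fin n // k ≠ j0} => d j0 k.1)
    rw [hm, ← hj0, ← hk0]
    exact hoff j0 k0.1 (fun h => k0.2 h.symm)
  have hcard : ∀ j : Fin n, (Finset.univ.erase j).card = n - 1 := by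
    intro j
    rw [Finset.card_erase_of_mem (Finset.mem_univ j), Finset.card_univ, Fintype.card_fin]
  have hcardR : ∀ j : Fin n, ((Finset.univ.erase j).card : ℝ) = (n:ℝ) - 1 := by
    intro j
    rw [hcard j, Nat.cast_sub (by omega)]; norm_num
  -- membership criterion
  have hmem : ∀ t : ℝ, Real.log ((n:ℝ) - 1) / m < t → t ∈ S := by
    intro t ht
    have htpos : 0 < t := lt_of_le_of_lt (div_nonneg hlog hmpos.le) ht
    refine ⟨htpos, fun j => ?_⟩
    have hne' : (Finset.univ.erase j).Nonempty := by
      rw [← Finset.card_pos, hcard j]; omega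
    have hstep : ∀ k ∈ Finset.univ.erase j, Real.exp (-t * d j k) < ((n:ℝ) - 1)⁻¹ := by
      intro k hk
      have hkj : k ≠ j := (Finset.mem_erase.mp hk).1
      have h1 : Real.log ((n:ℝ) - 1) < t * m := (div_lt_iff₀ hmpos).mp ht
      have h2 : t * m ≤ t * d j k := by
        exact mul_le_mul_of_nonneg_left (hm_le j k hkj) htpos.le
      have : -t * d j k < -Real.log ((n:ℝ) - 1) := by nlinarith
      calc Real.exp (-t * d j k) < Real.exp (-Real.log ((n:ℝ) - 1)) := Real.exp_lt_exp.mpr this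
        _ = ((n:ℝ) - 1)⁻¹ := by rw [Real.exp_neg, Real.exp_log hn1pos]
    calc ∑ k ∈ Finset.univ.erase j, Real.exp (-t * d j k)
        < ∑ _k ∈ Finset.univ.erase j, ((n:ℝ) - 1)⁻¹ :=
          Finset.sum_lt_sum_of_nonempty hne' hstep
      _ = 1 := by
          rw [Finset.sum_const, nsmul_eq_mul, hcardR j, mul_inv_cancel₀ hn1pos.ne']
  have hSne : S.Nonempty := ⟨Real.log ((n:ℝ) - 1) / m + 1, hmem _ (by linarith)⟩
  have hSbdd : BddBelow S := ⟨0, fun t ht => ht.1.le⟩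
  constructor
  · -- lower bound
    set M := ⨅ j, ⨆ k, d j k with hM
    obtain ⟨j0, hj0⟩ := exists_eq_ciInf_of_finite (f := fun j : Fin n => ⨆ k, d j k)
    have hsup_le : ∀ k, d j0 k ≤ M := by
      intro k
      rw [hM, ← hj0]
      exact le_ciSup (Set.finite_range _).bddAbove k
    have hMpos : 0 < M := by
      obtain ⟨k0, hk0⟩ := exists_ne j0
      exact lt_of_lt_of_le (hoff j0 k0 (fun h => hk0 (h.symm ▸ rfl))) (hsup_le k0)
    apply le_csInf hSne
    intro t ht
    obtain ⟨htpos, hsum⟩ := ht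
    have hlb : ((n:ℝ) - 1) * Real.exp (-t * M) ≤
        ∑ k ∈ Finset.univ.erase j0, Real.exp (-t * d j0 k) := by
      have := Finset.card_nsmul_le_sum (Finset.univ.erase j0)
        (fun k => Real.exp (-t * d j0 k)) (Real.exp (-t * M))
        (fun k _ => Real.exp_le_exp.mpr (by nlinarith [hsup_le k]))
      rwa [nsmul_eq_mul, hcardR j0] at this
    have h1 : ((n:ℝ) - 1) * Real.exp (-t * M) < 1 := lt_of_le_of_lt hlb (hsum j0)
    have h2 : Real.exp (-t * M) < ((n:ℝ) - 1)⁻¹ := by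
      rw [show ((n:ℝ) - 1)⁻¹ = 1 / ((n:ℝ) - 1) by ring, lt_div_iff₀ hn1pos]
      linarith
    have h3 : -t * M < -Real.log ((n:ℝ) - 1) := by
      have := Real.log_lt_log (Real.exp_pos _) h2
      rwa [Real.log_exp, Real.log_inv] at this
    have : Real.log ((n:ℝ) - 1) < t * M := by linarith
    exact le_of_lt ((div_lt_iff₀ hMpos).mpr this)
  · -- upper bound
    apply le_of_forall_gt_imp_ge_of_dense
    intro t ht
    exact csInf_le hSbdd (hmem t ht)
end

section
/- Let Z be a symmetric positive definite n×n real matrix with positive entries, and suppose its unique weighting w (the solution of Z w = 1) has all entries strictly positive. Let p = w / (Σ_j w_j) be the normalized weighting, viewed as a probability distribution. Then (Z p)_j = 1/(Σ_k w_k) for every j; consequently, for every q with 1 < q < ∞, the diversity of order q of p, defined as exp( (1/(1-q)) log Σ_{j : p_j > 0} p_j (Z p)_j^{q-1} ), equals Σ_j w_j, independently of q. -/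
/-- For a symmetric positive definite similarity matrix with positive entries whose
weighting is positive, the normalized weighting `p = w / Σ w` satisfies
`(Z p)_j = 1 / Σ w` for all `j`, and the diversity of every order `q ∈ (1, ∞)` at `p`
equals the magnitude `Σ w`. -/
theorem weighting_maximizes_diversity (n : ℕ) (hn : 0 < n)
    (Z : Matrix (Fin n) (Fin n) ℝ) (hsym : Z.IsSymm) (hpd : Z.PosDef)
    (hpos : ∀ j k, 0 < Z j k)
    (w : Fin n → ℝ) (hw : Z.mulVec w = 1) (hwpos : ∀ j, 0 < w j) :
    (∀ j, Z.mulVec (fun i => w i / ∑ k, w k) j = 1 / ∑ k, w k) ∧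
    ∀ q : ℝ, 1 < q →
      Real.exp ((1 / (1 - q)) *
        Real.log (∑ j ∈ Finset.univ.filter (fun j => 0 < w j / ∑ k, w k),
          (w j / ∑ k, w k) * (Z.mulVec (fun i => w i / ∑ k, w k) j) ^ (q - 1))) =
      ∑ j, w j := by
  have hS : 0 < ∑ k, w k :=
    Finset.sum_pos (fun k _ => hwpos k) ⟨⟨0, hn⟩, Finset.mem_univ _⟩
  have hSne : (∑ k, w k) ≠ 0 := ne_of_gt hS
  have hmv : ∀ j, Z.mulVec (fun i => w i / ∑ k, w k) j = 1 / ∑ k, w k := by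
    intro j
    have : Z.mulVec (fun i => w i / ∑ k, w k) j
        = (∑ l, Z j l * w l) / ∑ k, w k := by
      simp only [Matrix.mulVec, dotProduct, Finset.sum_div]
      exact Finset.sum_congr rfl fun x _ => by ring
    rw [this]
    have : (∑ l, Z j l * w l) = 1 := by
      have := congrFun hw j
      simpa [Matrix.mulVec, dotProduct] using this
    rw [this]
  refine ⟨hmv, fun q hq => ?_⟩
  have hfilter : Finset.univ.filter (fun j => 0 < w j / ∑ k, w k) = Finset.univ := by
    ext j; simp [div_pos (hwpos j) hS]
  rw [hfilter]
  have hsum : (∑ j, (w j / ∑ k, w k) * (Z.mulVec (fun i => w i / ∑ k, w k) j) ^ (q - 1))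
      = (1 / ∑ k, w k) ^ (q - 1) := by
    have : ∀ j, (w j / ∑ k, w k) * (Z.mulVec (fun i => w i / ∑ k, w k) j) ^ (q - 1)
        = (w j / ∑ k, w k) * (1 / ∑ k, w k) ^ (q - 1) := by
      intro j; rw [hmv j]
    rw [Finset.sum_congr rfl (fun j _ => this j), ← Finset.sum_mul]
    rw [← Finset.sum_div, div_self hSne, one_mul]
  rw [hsum]
  have h1 : (0:ℝ) < 1 / ∑ k, w k := by positivity
  rw [Real.log_rpow h1, Real.log_div one_ne_zero hSne, Real.log_one, zero_sub]
  have hq1 : (1:ℝ) - q ≠ 0 := by linarith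
  have : (1/(1-q)) * ((q-1) * (- Real.log (∑ k, w k))) = Real.log (∑ k, w k) := by
    field_simp; ring
  rw [this, Real.exp_log hS]
end

section
/- Let d be an invertible n×n real matrix with 1^T d^{-1} 1 ≠ 0, and for t > 0 near 0 suppose the entrywise exponential matrix Z(t) = exp[-t d] is invertible with weighting w(t) = Z(t)^{-1} 1. Then w(t) converges as t ↓ 0 to d^{-1} 1 / (1^T d^{-1} 1). -/
open Filter Topology Matrix


/-- As `t ↓ 0`, the weighting of `exp[-t d]` converges to `d⁻¹ 1 / (1ᵀ d⁻¹ 1)`. -/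
theorem weighting_limit_at_zero (n : ℕ) (d : Matrix (Fin n) (Fin n) ℝ)
    (hd : IsUnit d.det) (hsum : ∑ j, ∑ k, d⁻¹ j k ≠ 0)
    (hinv : ∃ ε > (0 : ℝ), ∀ t : ℝ, 0 < t → t < ε →
      IsUnit (Matrix.of (fun j k => Real.exp (-t * d j k))).det) :
    Filter.Tendsto
      (fun t : ℝ => (Matrix.of (fun j k => Real.exp (-t * d j k)))⁻¹.mulVec 1)
      (nhdsWithin 0 (Set.Ioi 0))
      (nhds (fun j => d⁻¹.mulVec 1 j / ∑ i, ∑ k, d⁻¹ i k)) := by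
  obtain ⟨ε, hε, hZ⟩ := hinv
  set Z : ℝ → Matrix (Fin n) (Fin n) ℝ :=
    fun t => Matrix.of (fun j k => Real.exp (-t * d j k)) with hZdef
  set M : ℝ → Matrix (Fin n) (Fin n) ℝ :=
    fun t => Matrix.of (fun j k => (1 - Real.exp (-t * d j k)) / t) with hMdef
  set S : ℝ := ∑ j, ∑ k, d⁻¹ j k with hSdef
  set c : ℝ → ℝ := fun t => ∑ j, ∑ k, (M t)⁻¹ j k with hcdef
  -- M tends to d
  have hM : Tendsto M (nhdsWithin 0 (Set.Ioi 0)) (nhds d) := by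
    refine tendsto_pi_nhds.mpr ?_
    intro j
    rw [tendsto_pi_nhds]
    intro k
    set a := d j k
    have hf : HasDerivAt (fun t : ℝ => 1 - Real.exp (-t * a)) a 0 := by
      have h1 : HasDerivAt (fun t : ℝ => -t * a) (-a) 0 := by
        simpa using ((hasDerivAt_id (0:ℝ)).neg.mul_const a)
      simpa using h1.exp.const_sub 1
    have h3 : Tendsto (slope (fun t : ℝ => 1 - Real.exp (-t * a)) 0)
        (nhdsWithin 0 (Set.Ioi 0)) (nhds a) :=
      (hasDerivAt_iff_tendsto_slope.mp hf).mono_left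
        (nhdsWithin_mono _ (fun x hx => ne_of_gt hx))
    refine h3.congr' ?_
    filter_upwards [self_mem_nhdsWithin] with t ht
    simp [hMdef, slope_def_field, div_eq_mul_inv, neg_mul]
    exact Or.inl rfl
  -- inverse of M tends to d⁻¹
  have hcontinv : ContinuousAt Inv.inv d := by
    apply continuousAt_matrix_inv
    rw [Ring.inverse_eq_inv']
    exact continuousAt_inv₀ (by simpa [isUnit_iff_ne_zero] using hd)
  have hMinv : Tendsto (fun t => (M t)⁻¹) (nhdsWithin 0 (Set.Ioi 0)) (nhds d⁻¹) :=
    hcontinv.tendsto.comp hM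
  -- determinant of M tends to det d, eventually nonzero
  have hdet : Tendsto (fun t => (M t).det) (nhdsWithin 0 (Set.Ioi 0)) (nhds d.det) :=
    (Continuous.matrix_det continuous_id).continuousAt.tendsto.comp hM
  have hdetne : ∀ᶠ t in nhdsWithin 0 (Set.Ioi 0), (M t).det ≠ 0 :=
    hdet (isOpen_ne.mem_nhds (by simpa [isUnit_iff_ne_zero] using hd))
  -- c tends to S
  have hc : Tendsto c (nhdsWithin 0 (Set.Ioi 0)) (nhds S) := by
    have : Continuous (fun A : Matrix (Fin n) (Fin n) ℝ => ∑ j, ∑ k, A j k) :=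
      continuous_finset_sum _ fun j _ => continuous_finset_sum _ fun k _ =>
        (continuous_apply k).comp (continuous_apply j)
    exact (this.continuousAt.tendsto).comp hMinv
  have hct : Tendsto (fun t => c t - t) (nhdsWithin 0 (Set.Ioi 0)) (nhds S) := by
    simpa using hc.sub (tendsto_nhdsWithin_of_tendsto_nhds tendsto_id)
  have hctne : ∀ᶠ t in nhdsWithin 0 (Set.Ioi 0), c t - t ≠ 0 :=
    hct (isOpen_ne.mem_nhds hsum)
  -- the limit function
  have hlim : Tendsto (fun t => (c t - t)⁻¹ • (M t)⁻¹.mulVec 1)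
      (nhdsWithin 0 (Set.Ioi 0)) (nhds (S⁻¹ • d⁻¹.mulVec 1)) := by
    exact (hct.inv₀ hsum).smul
      ((Continuous.matrix_mulVec continuous_id continuous_const).continuousAt.tendsto.comp hMinv)
  have htarget : (fun j => d⁻¹.mulVec 1 j / S) = S⁻¹ • d⁻¹.mulVec 1 := by
    funext j
    simp [div_eq_inv_mul]
  rw [htarget]
  refine hlim.congr' ?_
  filter_upwards [hdetne, hctne, Ioo_mem_nhdsGT_of_mem (Set.left_mem_Ico.mpr hε)]
    with t ht1 ht2 ht3
  obtain ⟨ht0, htε⟩ := ht3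
  -- key algebraic identity
  have hMunit : IsUnit (M t).det := isUnit_iff_ne_zero.mpr ht1
  have hZM : ∀ j k, Z t j k = 1 - t * M t j k := by
    intro j k
    simp only [hZdef, hMdef, Matrix.of_apply]
    field_simp
    ring
  set w : Fin n → ℝ := (c t - t)⁻¹ • (M t)⁻¹.mulVec 1 with hw
  have hMw : (M t).mulVec w = (c t - t)⁻¹ • (1 : Fin n → ℝ) := by
    rw [hw, Matrix.mulVec_smul, Matrix.mulVec_mulVec, Matrix.mul_nonsing_inv _ hMunit,
      Matrix.one_mulVec]
  have hsumw : ∑ k, w k = (c t - t)⁻¹ * c t := by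
    rw [hw]
    simp only [Pi.smul_apply, smul_eq_mul, ← Finset.mul_sum]
    congr 1
    simp [Matrix.mulVec, dotProduct, hcdef]
  have hZw : (Z t).mulVec w = 1 := by
    funext j
    have : ((Z t).mulVec w) j = (∑ k, w k) - t * ((M t).mulVec w) j := by
      simp only [Matrix.mulVec, dotProduct]
      rw [Finset.mul_sum, ← Finset.sum_sub_distrib]
      refine Finset.sum_congr rfl fun k _ => ?_
      rw [hZM j k]; ring
    rw [this, hMw, hsumw]
    simp only [Pi.smul_apply, Pi.one_apply, smul_eq_mul, mul_one]
    field_simp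
  symm
  show (Z t)⁻¹.mulVec 1 = w
  calc (Z t)⁻¹.mulVec 1 = (Z t)⁻¹.mulVec ((Z t).mulVec w) := by rw [hZw]
    _ = w := by
        rw [Matrix.mulVec_mulVec, Matrix.nonsing_inv_mul _ (hZ t ht0 htε), Matrix.one_mulVec]
end

section
/- Let (X, d) be a finite metric space with n points x_1,…,x_n and pairwise-distinct points (d(x_j,x_k) > 0 for j ≠ k). Then as t → ∞, the weighting w(t) of Z(t) = exp[-t d] (when it exists, e.g. for all sufficiently large t) converges to the all-ones vector, and hence the magnitude function Mag(t; d) = Σ_j w(t)_j converges to n as t → ∞. -/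
/-- As `t → ∞`, the weighting of `exp[-t d]` on a finite metric space of `n` distinct
points converges to the all-ones vector, and the magnitude function converges to `n`. -/
theorem weighting_limit_at_infinity (X : Type*) [MetricSpace X] (n : ℕ)
    (x : Fin n → X) (hx : Function.Injective x) :
    Filter.Tendsto
      (fun t : ℝ => (Matrix.of (fun j k => Real.exp (-t * dist (x j) (x k))))⁻¹.mulVec 1)
      Filter.atTop (nhds (1 : Fin n → ℝ)) ∧
    Filter.Tendsto
      (fun t : ℝ =>
        ∑ j, (Matrix.of (fun j k => Real.exp (-t * dist (x j) (x k))))⁻¹.mulVec 1 j)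
      Filter.atTop (nhds (n : ℝ)) := by
  set Z : ℝ → Matrix (Fin n) (Fin n) ℝ :=
    fun t => Matrix.of (fun j k => Real.exp (-t * dist (x j) (x k))) with hZ
  have hZlim : Filter.Tendsto Z Filter.atTop (nhds (1 : Matrix (Fin n) (Fin n) ℝ)) := by
    rw [show (1 : Matrix (Fin n) (Fin n) ℝ) = Matrix.of (fun j k : Fin n => if j = k then (1:ℝ) else 0) by
      ext j k; simp [Matrix.one_apply]]
    apply tendsto_pi_nhds.2
    intro j
    apply tendsto_pi_nhds.2
    intro k
    by_cases h : j = k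
    · subst h
      simp only [hZ, Matrix.of_apply, dist_self, mul_zero, Real.exp_zero, if_pos]
      exact tendsto_const_nhds
    · simp only [hZ, Matrix.of_apply, if_neg h]
      have hd : 0 < dist (x j) (x k) := dist_pos.2 (fun he => h (hx he))
      have : Filter.Tendsto (fun t : ℝ => -t * dist (x j) (x k)) Filter.atTop Filter.atBot := by
        apply Filter.Tendsto.atBot_mul_const hd
        exact Filter.tendsto_neg_atTop_atBot
      exact Real.tendsto_exp_atBot.comp this
  have hinv : Filter.Tendsto (fun t => (Z t)⁻¹) Filter.atTop
      (nhds ((1 : Matrix (Fin n) (Fin n) ℝ)⁻¹)) := by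
    have hc : ContinuousAt Inv.inv (1 : Matrix (Fin n) (Fin n) ℝ) := by
      apply continuousAt_matrix_inv
      simp only [Matrix.det_one]
      have h1 : (1 : ℝ) ≠ 0 := one_ne_zero
      have := (continuousAt_inv₀ h1)
      simp only [Ring.inverse_eq_inv']
      exact this
    exact hc.tendsto.comp hZlim
  rw [inv_one] at hinv
  have hmul : Filter.Tendsto (fun t => (Z t)⁻¹.mulVec 1) Filter.atTop
      (nhds ((1 : Matrix (Fin n) (Fin n) ℝ).mulVec 1)) := by
    have hc : Continuous (fun A : Matrix (Fin n) (Fin n) ℝ => A.mulVec 1) :=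
      continuous_id.matrix_mulVec continuous_const
    exact (hc.continuousAt).tendsto.comp hinv
  rw [Matrix.one_mulVec] at hmul
  refine ⟨hmul, ?_⟩
  have hsum : Filter.Tendsto (fun t => ∑ j, (Z t)⁻¹.mulVec 1 j) Filter.atTop
      (nhds (∑ j : Fin n, (1 : Fin n → ℝ) j)) := by
    apply Filter.Tendsto.comp (g := fun v : Fin n → ℝ => ∑ j, v j)
    · exact (continuous_finset_sum _ fun j _ => continuous_apply j).continuousAt.tendsto
    · exact hmul
  simp only [Pi.one_apply, Finset.sum_const, Finset.card_univ, Fintype.card_fin,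
    nsmul_eq_mul, mul_one] at hsum
  exact hsum
end

section
/- Consider the three-point metric space {x_1, x_2, x_3} with d(x_1,x_2) = d(x_1,x_3) = 1 and d(x_2,x_3) = δ where 0 < δ < 2. For t > 0, the weighting w of Z = exp[-t d] satisfies w_1 = (e^{(δ+2)t} - 2 e^{(δ+1)t} + e^{2t}) / (e^{(δ+2)t} - 2 e^{δ t} + e^{2t}) and w_2 = w_3 = (e^{(δ+2)t} - e^{(δ+1)t}) / (e^{(δ+2)t} - 2 e^{δ t} + e^{2t}). -/
/-- Explicit weighting for the isoceles three-point metric space with side lengths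
`1, 1, δ`. -/
theorem isoceles_weighting (δ t : ℝ) (hδ0 : 0 < δ) (hδ2 : δ < 2) (ht : 0 < t) :
    Real.exp ((δ + 2) * t) - 2 * Real.exp (δ * t) + Real.exp (2 * t) ≠ 0 ∧
    (Matrix.of ![![1, Real.exp (-t), Real.exp (-t)],
                 ![Real.exp (-t), 1, Real.exp (-δ * t)],
                 ![Real.exp (-t), Real.exp (-δ * t), 1]]).mulVec
      ![(Real.exp ((δ + 2) * t) - 2 * Real.exp ((δ + 1) * t) + Real.exp (2 * t)) /
          (Real.exp ((δ + 2) * t) - 2 * Real.exp (δ * t) + Real.exp (2 * t)),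
        (Real.exp ((δ + 2) * t) - Real.exp ((δ + 1) * t)) /
          (Real.exp ((δ + 2) * t) - 2 * Real.exp (δ * t) + Real.exp (2 * t)),
        (Real.exp ((δ + 2) * t) - Real.exp ((δ + 1) * t)) /
          (Real.exp ((δ + 2) * t) - 2 * Real.exp (δ * t) + Real.exp (2 * t))] = 1 := by
  have ha : (0:ℝ) < Real.exp t := Real.exp_pos t
  have hb : (0:ℝ) < Real.exp (δ * t) := Real.exp_pos _
  have h1 : Real.exp ((δ + 2) * t) = Real.exp (δ * t) * (Real.exp t * Real.exp t) := by
    rw [← Real.exp_add, ← Real.exp_add]; ring_nf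
  have h2 : Real.exp ((δ + 1) * t) = Real.exp (δ * t) * Real.exp t := by
    rw [← Real.exp_add]; ring_nf
  have h3 : Real.exp (2 * t) = Real.exp t * Real.exp t := by
    rw [← Real.exp_add]; ring_nf
  have h4 : Real.exp (-t) = (Real.exp t)⁻¹ := by rw [Real.exp_neg]
  have h5 : Real.exp (-(δ * t)) = (Real.exp (δ * t))⁻¹ := by rw [Real.exp_neg]
  have hD : Real.exp ((δ + 2) * t) - 2 * Real.exp (δ * t) + Real.exp (2 * t) ≠ 0 := by
    have e1 : Real.exp (δ * t) < Real.exp ((δ + 2) * t) := by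
      apply Real.exp_lt_exp.2; nlinarith
    have e2 : Real.exp (δ * t) < Real.exp (2 * t) := by
      apply Real.exp_lt_exp.2; nlinarith
    nlinarith
  refine ⟨hD, ?_⟩
  funext i
  fin_cases i <;>
  · simp [Matrix.mulVec, dotProduct, Fin.sum_univ_succ, h1, h2, h3, h4, h5] at hD ⊢
    ring_nf at hD ⊢
    field_simp
    rw [div_eq_iff (by intro h; apply hD; linear_combination h)]
    ring
end

section
/- Let Z be an n×n strictly diagonally dominant matrix with Z_{jj} = 1 for all j and Z_{jk} ∈ [0,1) for j ≠ k (for example Z = exp[-t d] with t above the diagonal cutoff of a finite metric space). Then Z is invertible and its unique weighting w = Z^{-1} 1 has all entries strictly positive. -/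
/-- A strictly diagonally dominant similarity matrix with unit diagonal and off-diagonal
entries in `[0,1)` is invertible, and its weighting `Z⁻¹ 1` is entrywise positive. -/
theorem sdd_weighting_pos (n : ℕ) (Z : Matrix (Fin n) (Fin n) ℝ)
    (hdiag : ∀ j, Z j j = 1)
    (hoff : ∀ j k, j ≠ k → 0 ≤ Z j k ∧ Z j k < 1)
    (hdd : ∀ j, ∑ k ∈ Finset.univ.erase j, Z j k < 1) :
    IsUnit Z.det ∧ ∀ j, 0 < Z⁻¹.mulVec 1 j := by
  have hdet : Z.det ≠ 0 := by
    apply det_ne_zero_of_sum_row_lt_diag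
    intro k
    rw [hdiag k]
    simp only [Real.norm_eq_abs, abs_one]
    calc ∑ j ∈ Finset.univ.erase k, |Z k j|
        = ∑ j ∈ Finset.univ.erase k, Z k j := by
          refine Finset.sum_congr rfl fun j hj => ?_
          exact abs_of_nonneg (hoff k j (Ne.symm (Finset.ne_of_mem_erase hj))).1
      _ < 1 := hdd k
  have hunit : IsUnit Z.det := isUnit_iff_ne_zero.mpr hdet
  refine ⟨hunit, ?_⟩
  set w : Fin n → ℝ := Z⁻¹.mulVec 1 with hw
  have hZw : Z.mulVec w = 1 := by
    rw [hw, Matrix.mulVec_mulVec, Matrix.mul_nonsing_inv Z hunit, Matrix.one_mulVec]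
  -- for each j : (Z w) j = w j + ∑_{k≠j} Z j k * w k = 1
  have key : ∀ j, w j + ∑ k ∈ Finset.univ.erase j, Z j k * w k = 1 := by
    intro j
    have := congrFun hZw j
    rw [Matrix.mulVec, dotProduct] at this
    rw [← Finset.add_sum_erase _ _ (Finset.mem_univ j), hdiag j, one_mul] at this
    exact this
  intro j₀
  by_contra hneg
  push_neg at hneg
  have hn : 0 < n := Fin.pos_iff_nonempty.mpr ⟨j₀⟩
  haveI : Nonempty (Fin n) := ⟨j₀⟩
  -- take argmin and argmax
  obtain ⟨j, -, hjmin⟩ := Finset.exists_min_image Finset.univ w ⟨j₀, Finset.mem_univ j₀⟩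
  obtain ⟨i, -, himax⟩ := Finset.exists_max_image Finset.univ w ⟨j₀, Finset.mem_univ j₀⟩
  have hwj : w j ≤ 0 := le_trans (hjmin j₀ (Finset.mem_univ j₀)) hneg
  have hsnn : ∀ m, 0 ≤ ∑ k ∈ Finset.univ.erase m, Z m k := fun m =>
    Finset.sum_nonneg fun k hk => (hoff m k (Ne.symm (Finset.ne_of_mem_erase hk))).1
  -- max bound : w i ≤ 1 - w j
  have hwi : w i ≤ 1 - w j := by
    have h1 := key i
    have hsum : w j * ∑ k ∈ Finset.univ.erase i, Z i k ≤
        ∑ k ∈ Finset.univ.erase i, Z i k * w k := by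
      rw [Finset.mul_sum]
      refine Finset.sum_le_sum fun k hk => ?_
      rw [mul_comm]
      exact mul_le_mul_of_nonneg_left (hjmin k (Finset.mem_univ k))
        (hoff i k (Ne.symm (Finset.ne_of_mem_erase hk))).1
    have h2 : w j * ∑ k ∈ Finset.univ.erase i, Z i k ≥ w j := by
      nlinarith [hdd i, hsnn i]
    linarith
  -- contradiction at argmin j
  have h1 := key j
  have hsum : ∑ k ∈ Finset.univ.erase j, Z j k * w k ≤
      (1 - w j) * ∑ k ∈ Finset.univ.erase j, Z j k := by
    rw [mul_comm, Finset.sum_mul]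
    refine Finset.sum_le_sum fun k hk => ?_
    exact mul_le_mul_of_nonneg_left (le_trans (himax k (Finset.mem_univ k)) hwi)
      (hoff j k (Ne.symm (Finset.ne_of_mem_erase hk))).1
  nlinarith [hdd j, hsnn j]
end
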